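/- For the weight function w(T_p) = Σ_{1≤i<j≤m} δ_{ij}(p) ε^{j-i} with ε = 1/C(m,2): among all finite multisets R of lattice paths in L with Σ_{r∈R} T_r equal to a fixed pattern S, any multiset minimizing Σ_{r∈R} w(T_r) is pairwise non-kissing. -/

import Mathlib

open Finset

/-- Pairs `{u<v}` and `{x<y}` (values in `ℕ ∪ {∞}`) are non-nesting if
neither `x<u<v<y` nor `u<x<y<v`. -/
def PairNonNesting (u v x y : WithTop ℕ) : Prop :=
  ¬ (x < u ∧ u < v ∧ v < y) ∧ ¬ (u < x ∧ x < y ∧ y < v)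

/-- Pairs `{u<v}` and `{x<y}` are non-crossing if neither `x<u<y<v` nor `u<x<v<y`. -/
def PairNonCrossing (u v x y : WithTop ℕ) : Prop :=
  ¬ (x < u ∧ u < y ∧ y < v) ∧ ¬ (u < x ∧ x < v ∧ v < y)

/-- Remove one common entry (equal entries in equal positions) from the two lists. -/
def stripOnce (I J : List ℕ) : Option (List ℕ × List ℕ) :=
  ((List.range (min I.length J.length)).find? (fun s => I.getD s 0 == J.getD s 0)).map
    (fun s => (I.eraseIdx s, J.eraseIdx s))

def stripAux : ℕ → List ℕ → List ℕ → List ℕ × List ℕ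
  | 0, I, J => (I, J)
  | n+1, I, J =>
    match stripOnce I J with
    | none => (I, J)
    | some (I', J') => stripAux n I' J'

/-- Repeatedly remove the "common part" (equal entries in equal positions). -/
def strip (I J : List ℕ) : List ℕ × List ℕ := stripAux I.length I J

/-- The `s`-th entry (0-indexed) of the list, viewed in `ℕ ∪ {∞}`, with `∞` beyond the end. -/
def entry (l : List ℕ) (s : ℕ) : WithTop ℕ :=
  (l.map (fun a => (a : WithTop ℕ))).getD s ⊤

/-- Non-nesting condition on sorted lists `I`, `J` with `I` the shorter one:
after removing the common part, all consecutive-difference pairs are non-nesting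
(with the `∞` convention for the shorter list). -/
def ListsNonNesting (I J : List ℕ) : Prop :=
  ∀ s : ℕ, s + 1 < (strip I J).2.length →
    PairNonNesting (entry (strip I J).1 s) (entry (strip I J).1 (s+1))
      (entry (strip I J).2 s) (entry (strip I J).2 (s+1))

def ListsNonCrossing (I J : List ℕ) : Prop :=
  ∀ s : ℕ, s + 1 < (strip I J).2.length →
    PairNonCrossing (entry (strip I J).1 s) (entry (strip I J).1 (s+1))
      (entry (strip I J).2 s) (entry (strip I J).2 (s+1))

/-- The increasing list of elements of a finite set. -/
def sortedList (I : Finset ℕ) : List ℕ := I.sort (· ≤ ·)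

/-- Subsets `I`, `J` are non-nesting. -/
def SetsNonNesting (I J : Finset ℕ) : Prop :=
  if I.card ≤ J.card then ListsNonNesting (sortedList I) (sortedList J)
  else ListsNonNesting (sortedList J) (sortedList I)

/-- Subsets `I`, `J` are non-crossing. -/
def SetsNonCrossing (I J : Finset ℕ) : Prop :=
  if I.card ≤ J.card then ListsNonCrossing (sortedList I) (sortedList J)
  else ListsNonCrossing (sortedList J) (sortedList I)

/-- `A ≺ B`: every element of `A` is smaller than every element of `B`. -/
def Precedes (A B : Finset ℕ) : Prop := ∀ a ∈ A, ∀ b ∈ B, a < b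

/-- Leclerc–Zelevinsky weak separation. -/
def WeaklySeparated (I J : Finset ℕ) : Prop :=
  (J.card ≤ I.card ∧ ∃ J₁ J₂ : Finset ℕ, Disjoint J₁ J₂ ∧ J \ I = J₁ ∪ J₂ ∧
    Precedes J₁ (I \ J) ∧ Precedes (I \ J) J₂) ∨
  (I.card ≤ J.card ∧ ∃ I₁ I₂ : Finset ℕ, Disjoint I₁ I₂ ∧ I \ J = I₁ ∪ I₂ ∧
    Precedes I₁ (J \ I) ∧ Precedes (J \ I) I₂)

/-- Number of north steps of the path `p(I)` among its first `k` steps. -/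
def northCount (I : Finset ℕ) (k : ℕ) : ℕ := (I.filter (fun i => i ≤ k)).card

/-- Paths `p(I)`, `p(J)` are non-crossing: one lies weakly northwest of the other
along their entire length. -/
def PathsNonCrossing (I J : Finset ℕ) : Prop :=
  (∀ k, northCount J k ≤ northCount I k) ∨ (∀ k, northCount I k ≤ northCount J k)

/-- `[k₁, k₂]` (in step coordinates) is a proper common part of the paths `p(I)`, `p(J)`
of length `m`: a maximal shared connected subpath containing neither the source nor an
endpoint.  Maximality is expressed by the two paths separating just before `k₁` and just
after `k₂`. -/
def ProperCommonPart (m : ℕ) (I J : Finset ℕ) (k₁ k₂ : ℕ) : Prop :=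
  1 ≤ k₁ ∧ k₁ ≤ k₂ ∧ k₂ < m ∧
  (∀ k, k₁ ≤ k → k ≤ k₂ → northCount I k = northCount J k) ∧
  northCount I (k₁ - 1) ≠ northCount J (k₁ - 1) ∧
  northCount I (k₂ + 1) ≠ northCount J (k₂ + 1)

/-- Paths `p(I)`, `p(J)` are non-kissing: at every proper common part each path leaves
in the same direction in which it entered (the common part is a crossing, not a kiss). -/
def PathsNonKissing (m : ℕ) (I J : Finset ℕ) : Prop :=
  ∀ k₁ k₂, ProperCommonPart m I J k₁ k₂ → ((k₁ ∈ I) ↔ (k₂ + 1 ∈ I))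

/-- Number of north steps among the first `k` steps, for `k ∈ ℤ` (zero for `k ≤ 0`). -/
def northCountZ (I : Finset ℕ) (k : ℤ) : ℤ := (northCount I k.toNat : ℤ)

/-- The indicator Gelfand–Tsetlin pattern of the path `p(I)`: the cell
`[x,x+1] × [y,y+1]` gets a `1` if it lies southeast of the path and `0` if northwest. -/
noncomputable def Tpat (I : Finset ℕ) (x y : ℤ) : ℝ :=
  if y + 1 ≤ northCountZ I (x + y + 1) then 1 else 0

/-- `(x,y)` is a node of the partial staircase `L ⊆ L_m` with set of sink heights `A`:
it lies (weakly) southwest of some sink `(m-j, j)`, `j ∈ A`. -/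
def NodeL (m : ℕ) (A : Finset ℕ) (x y : ℤ) : Prop :=
  0 ≤ x ∧ 0 ≤ y ∧ ∃ j ∈ A, x + j ≤ m ∧ y ≤ j

/-- Same, with natural-number coordinates. -/
def InL (m : ℕ) (A : Finset ℕ) (x y : ℕ) : Prop :=
  ∃ j ∈ A, x + j ≤ m ∧ y ≤ j

/-- The path `p(I)` is contained in the partial staircase with sink heights `A`. -/
def PathInL (m : ℕ) (A : Finset ℕ) (I : Finset ℕ) : Prop :=
  ∀ k ≤ m, InL m A (k - northCount I k) (northCount I k)

/-- A critical node has edges of `L` leaving it toward both the north and the east. -/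
def CriticalNode (m : ℕ) (A : Finset ℕ) (x y : ℕ) : Prop :=
  InL m A (x + 1) y ∧ InL m A x (y + 1)

open Classical in
/-- `N(L)`: the number of critical nodes of the partial staircase. -/
noncomputable def numCritical (m : ℕ) (A : Finset ℕ) : ℕ :=
  ((Finset.range (m+1) ×ˢ Finset.range (m+1)).filter
    (fun p => CriticalNode m A p.1 p.2)).card

/-- The weight `w(T_p) = Σ_{1 ≤ i < j ≤ m} δ_{ij}(p) ε^{j-i}` with `ε = 1/C(m,2)`. -/
noncomputable def wgt (m : ℕ) (I : Finset ℕ) : ℝ :=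
  ∑ q ∈ (Finset.Icc 1 m ×ˢ Finset.Icc 1 m).filter (fun q => q.1 < q.2),
    (if (q.1 ∈ I ↔ q.2 ∈ I) then 0 else (1 / (m.choose 2 : ℝ)) ^ (q.2 - q.1))


/-! ### Auxiliary material for the exchange argument -/

/-- Swap tails after step `k₂`. -/
def mix (I J : Finset ℕ) (k₂ : ℕ) : Finset ℕ :=
  I.filter (· ≤ k₂) ∪ J.filter (fun a => k₂ < a)

lemma mem_mix (I J : Finset ℕ) (k₂ x : ℕ) :
    x ∈ mix I J k₂ ↔ (if x ≤ k₂ then x ∈ I else x ∈ J) := by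
  unfold mix
  simp only [Finset.mem_union, Finset.mem_filter]
  by_cases h : x ≤ k₂
  · rw [if_pos h]
    constructor
    · rintro (⟨h1, _⟩ | ⟨_, h2⟩)
      · exact h1
      · omega
    · intro h1; exact Or.inl ⟨h1, h⟩
  · rw [if_neg h]
    constructor
    · rintro (⟨_, h2⟩ | ⟨h1, _⟩)
      · omega
      · exact h1
    · intro h1; exact Or.inr ⟨h1, by omega⟩

lemma mix_subset {m : ℕ} {I J : Finset ℕ} (hI : I ⊆ Finset.Icc 1 m)
    (hJ : J ⊆ Finset.Icc 1 m) (k₂ : ℕ) : mix I J k₂ ⊆ Finset.Icc 1 m := by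
  unfold mix
  exact Finset.union_subset ((Finset.filter_subset _ _).trans hI)
    ((Finset.filter_subset _ _).trans hJ)

lemma ncStep (I : Finset ℕ) (i : ℕ) :
    northCount I (i + 1) = northCount I i + (if i + 1 ∈ I then 1 else 0) := by
  unfold northCount
  have h : I.filter (fun a => a ≤ i + 1) =
      I.filter (fun a => a ≤ i) ∪ I.filter (fun a => a = i + 1) := by
    rw [← Finset.filter_or]
    exact Finset.filter_congr (fun a _ => by constructor <;> omega)
  rw [h, Finset.card_union_of_disjoint (by
    simp only [Finset.disjoint_left, Finset.mem_filter]
    rintro a ⟨_, h1⟩ ⟨_, h2⟩; omega)]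
  congr 1
  rw [Finset.filter_eq']
  split <;> simp

lemma nc_mix (I J : Finset ℕ) (k₂ : ℕ) (hk : northCount I k₂ = northCount J k₂) :
    ∀ k, northCount (mix I J k₂) k = if k ≤ k₂ then northCount I k else northCount J k := by
  intro k
  induction k with
  | zero =>
    simp only [Nat.zero_le, if_pos]
    unfold northCount
    congr 1
    ext a
    simp only [Finset.mem_filter]
    constructor
    · rintro ⟨ha, h0⟩
      have := (mem_mix I J k₂ a).1 ha
      interval_cases a
      · simpa using this
    · rintro ⟨ha, h0⟩
      refine ⟨(mem_mix I J k₂ a).2 ?_, h0⟩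
      interval_cases a
      · simpa using ha
  | succ k ih =>
    rw [ncStep, ih]
    by_cases h1 : k + 1 ≤ k₂
    · have hk' : k ≤ k₂ := by omega
      rw [if_pos hk', if_pos h1, ncStep]
      have hmem : ((k + 1) ∈ mix I J k₂) ↔ ((k + 1) ∈ I) := by
        rw [mem_mix, if_pos h1]
      rw [if_congr hmem rfl rfl]
    · have hmem : ((k + 1) ∈ mix I J k₂) ↔ ((k + 1) ∈ J) := by
        rw [mem_mix, if_neg h1]
      rw [if_congr hmem rfl rfl, if_neg h1]
      by_cases h2 : k ≤ k₂
      · have hkk : k = k₂ := by omega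
        subst hkk
        rw [if_pos le_rfl, hk, ncStep]
      · rw [if_neg h2, ncStep]

lemma Tpat_mix (I J : Finset ℕ) (k₂ : ℕ) (hk : northCount I k₂ = northCount J k₂)
    (x y : ℤ) :
    Tpat (mix I J k₂) x y + Tpat (mix J I k₂) x y = Tpat I x y + Tpat J x y := by
  unfold Tpat northCountZ
  rw [nc_mix I J k₂ hk, nc_mix J I k₂ hk.symm]
  by_cases h : (x + y + 1).toNat ≤ k₂
  · rw [if_pos h, if_pos h]
  · rw [if_neg h, if_neg h]
    exact add_comm _ _

lemma pathInL_mix {m : ℕ} {A : Finset ℕ} {I J : Finset ℕ} (k₂ : ℕ)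
    (hk : northCount I k₂ = northCount J k₂)
    (hI : PathInL m A I) (hJ : PathInL m A J) : PathInL m A (mix I J k₂) := by
  intro k hkm
  rw [nc_mix I J k₂ hk]
  by_cases h : k ≤ k₂
  · rw [if_pos h]; exact hI k hkm
  · rw [if_neg h]; exact hJ k hkm

/-- Bounding the number of index pairs by `C(m,2)`. -/
lemma pairs_card_le (m : ℕ) :
    ((Finset.Icc 1 m ×ˢ Finset.Icc 1 m).filter (fun q => q.1 < q.2)).card ≤ m.choose 2 := by
  have h := Finset.card_le_card_of_injOn
    (f := fun q : ℕ × ℕ => ({q.1, q.2} : Finset ℕ))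
    (s := (Finset.Icc 1 m ×ˢ Finset.Icc 1 m).filter (fun q => q.1 < q.2))
    (t := (Finset.Icc 1 m).powersetCard 2)
    (by
      intro q hq
      simp only [Finset.mem_coe, Finset.mem_filter, Finset.mem_product] at hq
      rw [Finset.mem_coe, Finset.mem_powersetCard]
      refine ⟨?_, ?_⟩
      · intro a ha
        simp only [Finset.mem_insert, Finset.mem_singleton] at ha
        rcases ha with rfl | rfl
        · exact hq.1.1
        · exact hq.1.2
      · rw [Finset.card_insert_of_notMem (by simp; omega), Finset.card_singleton])
    (by
      intro q hq r hr hqr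
      have hqr' : ({q.1, q.2} : Finset ℕ) = {r.1, r.2} := hqr
      simp only [Finset.mem_coe, Finset.mem_filter, Finset.mem_product] at hq hr
      have h1 : q.1 ∈ ({r.1, r.2} : Finset ℕ) := by
        rw [← hqr']; exact Finset.mem_insert_self _ _
      have h2 : q.2 ∈ ({r.1, r.2} : Finset ℕ) := by
        rw [← hqr']; simp
      have h3 : r.1 ∈ ({q.1, q.2} : Finset ℕ) := by
        rw [hqr']; exact Finset.mem_insert_self _ _
      have h4 : r.2 ∈ ({q.1, q.2} : Finset ℕ) := by
        rw [hqr']; simp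
      simp only [Finset.mem_insert, Finset.mem_singleton] at h1 h2 h3 h4
      have := hq.2; have := hr.2
      ext <;> omega)
  rwa [Finset.card_powersetCard, Nat.card_Icc, Nat.add_sub_cancel] at h


noncomputable def term (ε : ℝ) (X : Finset ℕ) (q : ℕ × ℕ) : ℝ :=
  if (q.1 ∈ X ↔ q.2 ∈ X) then 0 else ε ^ (q.2 - q.1)

lemma term_nonneg {ε : ℝ} (hε : 0 ≤ ε) (X : Finset ℕ) (q : ℕ × ℕ) : 0 ≤ term ε X q := by
  unfold term; split
  · exact le_rfl
  · positivity

lemma term_le {ε : ℝ} (hε : 0 ≤ ε) (X : Finset ℕ) (q : ℕ × ℕ) :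
    term ε X q ≤ ε ^ (q.2 - q.1) := by
  unfold term; split
  · positivity
  · exact le_rfl

lemma term_congr (ε : ℝ) (X Y : Finset ℕ) (q : ℕ × ℕ)
    (h1 : q.1 ∈ X ↔ q.1 ∈ Y) (h2 : q.2 ∈ X ↔ q.2 ∈ Y) : term ε X q = term ε Y q := by
  unfold term; rw [if_congr (iff_congr h1 h2) rfl rfl]

def pairsP (m : ℕ) : Finset (ℕ × ℕ) :=
  (Finset.Icc 1 m ×ˢ Finset.Icc 1 m).filter (fun q => q.1 < q.2)

lemma wgt_eq (m : ℕ) (X : Finset ℕ) :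
    wgt m X = ∑ q ∈ pairsP m, term (1 / (m.choose 2 : ℝ)) X q := rfl

set_option maxHeartbeats 1000000 in
/-- The key exchange inequality, abstract form. -/
lemma exchange_sum (m k₁ k₂ : ℕ) (I J : Finset ℕ) (ε : ℝ) (hε0 : 0 < ε) (hε1 : ε ≤ 1)
    (hcard : ((((pairsP m).erase (k₁, k₂ + 1)).card : ℝ)) * ε < 1)
    (h1 : 1 ≤ k₁) (h12 : k₁ ≤ k₂) (h2 : k₂ < m)
    (hmid : ∀ i, k₁ < i → i ≤ k₂ → (i ∈ I ↔ i ∈ J))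
    (hd1 : ¬ (k₁ ∈ I ↔ k₁ ∈ J))
    (hd2 : ¬ ((k₂ + 1) ∈ I ↔ (k₂ + 1) ∈ J))
    (hkiss : ¬ (k₁ ∈ I ↔ (k₂ + 1) ∈ I)) :
    ∑ q ∈ pairsP m, (term ε (mix I J k₂) q + term ε (mix J I k₂) q)
      < ∑ q ∈ pairsP m, (term ε I q + term ε J q) := by
  classical
  have hq₀P : (k₁, k₂ + 1) ∈ pairsP m := by
    unfold pairsP
    simp only [Finset.mem_filter, Finset.mem_product, Finset.mem_Icc]
    omega
  -- membership facts
  have mk₁I : k₁ ∈ mix I J k₂ ↔ k₁ ∈ I := by rw [mem_mix, if_pos h12]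
  have mk₁J : k₁ ∈ mix J I k₂ ↔ k₁ ∈ J := by rw [mem_mix, if_pos h12]
  have mk₂I : k₂ + 1 ∈ mix I J k₂ ↔ k₂ + 1 ∈ J := by rw [mem_mix, if_neg (by omega)]
  have mk₂J : k₂ + 1 ∈ mix J I k₂ ↔ k₂ + 1 ∈ I := by rw [mem_mix, if_neg (by omega)]
  -- values at the special pair
  have tnew1 : term ε (mix I J k₂) (k₁, k₂ + 1) = 0 := by
    have hcond : (k₁ ∈ mix I J k₂ ↔ k₂ + 1 ∈ mix I J k₂) := by
      rw [mk₁I, mk₂I]; tauto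
    unfold term
    exact if_pos hcond
  have tnew2 : term ε (mix J I k₂) (k₁, k₂ + 1) = 0 := by
    have hcond : (k₁ ∈ mix J I k₂ ↔ k₂ + 1 ∈ mix J I k₂) := by
      rw [mk₁J, mk₂J]; tauto
    unfold term
    exact if_pos hcond
  have told1 : term ε I (k₁, k₂ + 1) = ε ^ (k₂ + 1 - k₁) := by
    unfold term
    exact if_neg hkiss
  have told2 : term ε J (k₁, k₂ + 1) = ε ^ (k₂ + 1 - k₁) := by
    have hcond : ¬ (k₁ ∈ J ↔ k₂ + 1 ∈ J) := by tauto
    unfold term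
    exact if_neg hcond
  -- the per-pair bound away from the special pair
  have key : ∀ q ∈ (pairsP m).erase (k₁, k₂ + 1),
      term ε (mix I J k₂) q + term ε (mix J I k₂) q
        ≤ term ε I q + term ε J q + 2 * ε ^ (k₂ + 2 - k₁) := by
    intro q hq
    have hqP : q ∈ pairsP m := Finset.mem_of_mem_erase hq
    have hqne : q ≠ (k₁, k₂ + 1) := Finset.ne_of_mem_erase hq
    obtain ⟨i, j⟩ := q
    unfold pairsP at hqP
    simp only [Finset.mem_filter, Finset.mem_product, Finset.mem_Icc] at hqP
    have hij : i < j := hqP.2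
    have h2e : (0:ℝ) ≤ 2 * ε ^ (k₂ + 2 - k₁) := by positivity
    by_cases hik : i ≤ k₂
    · have mi1 : i ∈ mix I J k₂ ↔ i ∈ I := by rw [mem_mix, if_pos hik]
      have mi2 : i ∈ mix J I k₂ ↔ i ∈ J := by rw [mem_mix, if_pos hik]
      by_cases hjk : j ≤ k₂
      · have mj1 : j ∈ mix I J k₂ ↔ j ∈ I := by rw [mem_mix, if_pos hjk]
        have mj2 : j ∈ mix J I k₂ ↔ j ∈ J := by rw [mem_mix, if_pos hjk]
        rw [term_congr ε _ I (i, j) mi1 mj1, term_congr ε _ J (i, j) mi2 mj2]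
        linarith
      · have mj1 : j ∈ mix I J k₂ ↔ j ∈ J := by rw [mem_mix, if_neg hjk]
        have mj2 : j ∈ mix J I k₂ ↔ j ∈ I := by rw [mem_mix, if_neg hjk]
        by_cases hdi : (i ∈ I ↔ i ∈ J)
        · rw [term_congr ε _ J (i, j) (mi1.trans hdi) mj1,
            term_congr ε _ I (i, j) (mi2.trans hdi.symm) mj2]
          linarith
        · by_cases hdj : (j ∈ I ↔ j ∈ J)
          · rw [term_congr ε _ I (i, j) mi1 (mj1.trans hdj.symm),
              term_congr ε _ J (i, j) mi2 (mj2.trans hdj)]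
            linarith
          · have hik1 : i ≤ k₁ := by
              by_contra hcon
              exact hdi (hmid i (by omega) hik)
            have hne' : i ≠ k₁ ∨ j ≠ k₂ + 1 := by
              by_contra hcc
              push_neg at hcc
              exact hqne (by rw [hcc.1, hcc.2])
            have hji : k₂ + 2 - k₁ ≤ j - i := by omega
            have b1 := term_le hε0.le (mix I J k₂) (i, j)
            have b2 := term_le hε0.le (mix J I k₂) (i, j)
            have b3 : ε ^ (j - i) ≤ ε ^ (k₂ + 2 - k₁) :=
              pow_le_pow_of_le_one hε0.le hε1 hji
            have b4 := term_nonneg hε0.le I (i, j)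
            have b5 := term_nonneg hε0.le J (i, j)
            simp only at b1 b2
            linarith
    · have hjk : ¬ j ≤ k₂ := by omega
      have mi1 : i ∈ mix I J k₂ ↔ i ∈ J := by rw [mem_mix, if_neg hik]
      have mi2 : i ∈ mix J I k₂ ↔ i ∈ I := by rw [mem_mix, if_neg hik]
      have mj1 : j ∈ mix I J k₂ ↔ j ∈ J := by rw [mem_mix, if_neg hjk]
      have mj2 : j ∈ mix J I k₂ ↔ j ∈ I := by rw [mem_mix, if_neg hjk]
      rw [term_congr ε _ J (i, j) mi1 mj1, term_congr ε _ I (i, j) mi2 mj2]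
      linarith
  -- sum manipulations
  rw [← Finset.add_sum_erase _ _ hq₀P, ← Finset.add_sum_erase _
    (fun q => term ε I q + term ε J q) hq₀P]
  have hsum : ∑ q ∈ (pairsP m).erase (k₁, k₂ + 1),
        (term ε (mix I J k₂) q + term ε (mix J I k₂) q)
      ≤ ∑ q ∈ (pairsP m).erase (k₁, k₂ + 1), (term ε I q + term ε J q)
        + (((pairsP m).erase (k₁, k₂ + 1)).card : ℝ) * (2 * ε ^ (k₂ + 2 - k₁)) := by
    calc ∑ q ∈ (pairsP m).erase (k₁, k₂ + 1),
          (term ε (mix I J k₂) q + term ε (mix J I k₂) q)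
        ≤ ∑ q ∈ (pairsP m).erase (k₁, k₂ + 1),
            (term ε I q + term ε J q + 2 * ε ^ (k₂ + 2 - k₁)) :=
          Finset.sum_le_sum key
      _ = _ := by
          rw [Finset.sum_add_distrib, Finset.sum_const, nsmul_eq_mul]
  have hd0 : 0 < ε ^ (k₂ + 1 - k₁) := by positivity
  have hcc : (((pairsP m).erase (k₁, k₂ + 1)).card : ℝ) * (2 * ε ^ (k₂ + 2 - k₁))
      < 2 * ε ^ (k₂ + 1 - k₁) := by
    have hpow : ε ^ (k₂ + 2 - k₁) = ε ^ (k₂ + 1 - k₁) * ε := by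
      rw [← pow_succ]
      congr 1
      omega
    calc (((pairsP m).erase (k₁, k₂ + 1)).card : ℝ) * (2 * ε ^ (k₂ + 2 - k₁))
        = ((((pairsP m).erase (k₁, k₂ + 1)).card : ℝ) * ε) * (2 * ε ^ (k₂ + 1 - k₁)) := by
          rw [hpow]; ring
      _ < 1 * (2 * ε ^ (k₂ + 1 - k₁)) := by
          apply mul_lt_mul_of_pos_right hcard
          positivity
      _ = 2 * ε ^ (k₂ + 1 - k₁) := one_mul _
  rw [tnew1, tnew2, told1, told2]
  linarith

/-- The key exchange inequality for the weight. -/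
lemma wgt_exchange (m k₁ k₂ : ℕ) (I J : Finset ℕ)
    (h1 : 1 ≤ k₁) (h12 : k₁ ≤ k₂) (h2 : k₂ < m)
    (hmid : ∀ i, k₁ < i → i ≤ k₂ → (i ∈ I ↔ i ∈ J))
    (hd1 : ¬ (k₁ ∈ I ↔ k₁ ∈ J))
    (hd2 : ¬ ((k₂ + 1) ∈ I ↔ (k₂ + 1) ∈ J))
    (hkiss : ¬ (k₁ ∈ I ↔ (k₂ + 1) ∈ I)) :
    wgt m (mix I J k₂) + wgt m (mix J I k₂) < wgt m I + wgt m J := by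
  have hm2 : 2 ≤ m := by omega
  have hcN : 0 < m.choose 2 := Nat.choose_pos hm2
  have hcpos : (0:ℝ) < (m.choose 2 : ℝ) := by exact_mod_cast hcN
  have hε0 : 0 < 1 / (m.choose 2 : ℝ) := by positivity
  have hε1 : 1 / (m.choose 2 : ℝ) ≤ 1 := by
    rw [div_le_one hcpos]
    exact_mod_cast hcN
  have hq₀P : (k₁, k₂ + 1) ∈ pairsP m := by
    unfold pairsP
    simp only [Finset.mem_filter, Finset.mem_product, Finset.mem_Icc]
    omega
  have hcard : ((((pairsP m).erase (k₁, k₂ + 1)).card : ℝ)) * (1 / (m.choose 2 : ℝ)) < 1 := by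
    have hlt1 : ((pairsP m).erase (k₁, k₂ + 1)).card < m.choose 2 :=
      lt_of_lt_of_le (Finset.card_erase_lt_of_mem hq₀P) (pairs_card_le m)
    have hlt2 : ((((pairsP m).erase (k₁, k₂ + 1)).card : ℝ)) < (m.choose 2 : ℝ) := by
      exact_mod_cast hlt1
    rw [mul_one_div, div_lt_one hcpos]
    exact hlt2
  have := exchange_sum m k₁ k₂ I J (1 / (m.choose 2 : ℝ)) hε0 hε1 hcard
    h1 h12 h2 hmid hd1 hd2 hkiss
  rw [Finset.sum_add_distrib, Finset.sum_add_distrib] at this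
  rw [wgt_eq, wgt_eq, wgt_eq, wgt_eq]
  exact this

/-- Among all finite multisets of lattice paths in `L` whose indicator patterns sum to a
fixed pattern, any multiset minimizing the total weight is pairwise non-kissing. -/
theorem min_weight_nonKissing (m : ℕ) (A : Finset ℕ) (hA : A ⊆ Finset.range (m+1))
    (R : Multiset (Finset ℕ))
    (hR : ∀ I ∈ R, I ⊆ Finset.Icc 1 m ∧ PathInL m A I)
    (hmin : ∀ R' : Multiset (Finset ℕ),
      (∀ I ∈ R', I ⊆ Finset.Icc 1 m ∧ PathInL m A I) →
      (∀ x y : ℤ, (R'.map (fun I => Tpat I x y)).sum = (R.map (fun I => Tpat I x y)).sum) →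
      (R.map (wgt m)).sum ≤ (R'.map (wgt m)).sum) :
    ∀ I ∈ R, ∀ J ∈ R, PathsNonKissing m I J := by
  intro I hI J hJ k₁ k₂ hpcp
  by_contra hkiss
  obtain ⟨h1, h12, h2, hC, hD1, hD2⟩ := hpcp
  have hk2 : northCount I k₂ = northCount J k₂ := hC k₂ h12 le_rfl
  have hmid : ∀ i, k₁ < i → i ≤ k₂ → (i ∈ I ↔ i ∈ J) := by
    intro i hgt hle
    obtain ⟨t, rfl⟩ : ∃ t, i = t + 1 := ⟨i - 1, by omega⟩
    have e1 := ncStep I t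
    have e2 := ncStep J t
    have c1 : northCount I t = northCount J t := hC t (by omega) (by omega)
    have c2 : northCount I (t + 1) = northCount J (t + 1) := hC (t + 1) (by omega) hle
    by_cases hI' : t + 1 ∈ I <;> by_cases hJ' : t + 1 ∈ J
    · exact iff_of_true hI' hJ'
    · exfalso; rw [if_pos hI'] at e1; rw [if_neg hJ'] at e2; omega
    · exfalso; rw [if_neg hI'] at e1; rw [if_pos hJ'] at e2; omega
    · exact iff_of_false hI' hJ'
  have hd1 : ¬ (k₁ ∈ I ↔ k₁ ∈ J) := by
    obtain ⟨t, ht⟩ : ∃ t, k₁ = t + 1 := ⟨k₁ - 1, by omega⟩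
    subst ht
    have e1 := ncStep I t
    have e2 := ncStep J t
    have c2 : northCount I (t + 1) = northCount J (t + 1) := hC (t + 1) le_rfl h12
    have hne : northCount I t ≠ northCount J t := by simpa using hD1
    intro hiff
    by_cases hI' : t + 1 ∈ I
    · rw [if_pos hI'] at e1; rw [if_pos (hiff.1 hI')] at e2; omega
    · rw [if_neg hI'] at e1; rw [if_neg (fun h => hI' (hiff.2 h))] at e2; omega
  have hd2 : ¬ ((k₂ + 1) ∈ I ↔ (k₂ + 1) ∈ J) := by
    have e1 := ncStep I k₂
    have e2 := ncStep J k₂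
    intro hiff
    by_cases hI' : k₂ + 1 ∈ I
    · rw [if_pos hI'] at e1; rw [if_pos (hiff.1 hI')] at e2; exact hD2 (by omega)
    · rw [if_neg hI'] at e1; rw [if_neg (fun h => hI' (hiff.2 h))] at e2; exact hD2 (by omega)
  have hJI : J ≠ I := by
    rintro rfl
    exact hd1 Iff.rfl
  have hJR : J ∈ R.erase I := (Multiset.mem_erase_of_ne hJI).2 hJ
  have hRdec : R = I ::ₘ J ::ₘ (R.erase I).erase J := by
    rw [Multiset.cons_erase hJR, Multiset.cons_erase hI]
  have hmem' : ∀ K ∈ (mix I J k₂ ::ₘ mix J I k₂ ::ₘ (R.erase I).erase J),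
      K ⊆ Finset.Icc 1 m ∧ PathInL m A K := by
    intro K hK
    simp only [Multiset.mem_cons] at hK
    rcases hK with rfl | rfl | hK
    · exact ⟨mix_subset (hR I hI).1 (hR J hJ).1 k₂,
        pathInL_mix k₂ hk2 (hR I hI).2 (hR J hJ).2⟩
    · exact ⟨mix_subset (hR J hJ).1 (hR I hI).1 k₂,
        pathInL_mix k₂ hk2.symm (hR J hJ).2 (hR I hI).2⟩
    · exact hR K (Multiset.mem_of_mem_erase (Multiset.mem_of_mem_erase hK))
  have hpat : ∀ x y : ℤ,
      ((mix I J k₂ ::ₘ mix J I k₂ ::ₘ (R.erase I).erase J).map (fun K => Tpat K x y)).sum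
        = (R.map (fun K => Tpat K x y)).sum := by
    intro x y
    conv_rhs => rw [hRdec]
    simp only [Multiset.map_cons, Multiset.sum_cons]
    have := Tpat_mix I J k₂ hk2 x y
    linarith
  have hle := hmin _ hmem' hpat
  have hlt := wgt_exchange m k₁ k₂ I J h1 h12 h2 hmid hd1 hd2 hkiss
  have eR : (R.map (wgt m)).sum
      = wgt m I + wgt m J + (((R.erase I).erase J).map (wgt m)).sum := by
    conv_lhs => rw [hRdec]
    simp only [Multiset.map_cons, Multiset.sum_cons]
    ring
  have eR' : ((mix I J k₂ ::ₘ mix J I k₂ ::ₘ (R.erase I).erase J).map (wgt m)).sum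
      = wgt m (mix I J k₂) + wgt m (mix J I k₂)
        + (((R.erase I).erase J).map (wgt m)).sum := by
    simp only [Multiset.map_cons, Multiset.sum_cons]
    ring
  rw [eR, eR'] at hle
  linarith
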